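/- For every finite family of full monomials (m_j)_{j∈J} over a finite set of ports P, there exists a unique configuration γ̄ ∈ C(P) such that for every configuration γ ∈ C(P): γ satisfies the PCL formula ∑_{j∈J} m_j if and only if γ = γ̄. Concretely, γ̄ = {a_j : j ∈ J} where a_j is the unique interaction satisfying m_j. -/

import Mathlib

/-- Syntax of propositional interaction logic (PIL) over a set of ports `P`. -/
inductive PIL (P : Type) where
  | tt : PIL P
  | port : P → PIL P
  | neg : PIL P → PIL P
  | disj : PIL P → PIL P → PIL P

/-- Satisfaction of a PIL formula by an interaction (a finite set of ports). -/
def PILsat {P : Type} (α : Finset P) : PIL P → Prop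
  | .tt => True
  | .port p => p ∈ α
  | .neg φ => ¬ PILsat α φ
  | .disj φ ψ => PILsat α φ ∨ PILsat α ψ

/-- Syntax of propositional configuration logic (PCL) over ports `P`. -/
inductive PCL (P : Type) where
  | tt : PCL P
  | pil : PIL P → PCL P
  | neg : PCL P → PCL P
  | union : PCL P → PCL P → PCL P
  | coal : PCL P → PCL P → PCL P

/-- Satisfaction of a PCL formula by a configuration (a finite set of interactions). -/
def PCLsat {P : Type} [DecidableEq P] : Finset (Finset P) → PCL P → Prop
  | _, .tt => True
  | γ, .pil φ => ∀ a ∈ γ, PILsat a φ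
  | γ, .neg f => ¬ PCLsat γ f
  | γ, .union f g => PCLsat γ f ∨ PCLsat γ g
  | γ, .coal f g => ∃ γ₁ γ₂ : Finset (Finset P),
      γ₁.Nonempty ∧ γ₂.Nonempty ∧ γ₁ ∪ γ₂ = γ ∧ PCLsat γ₁ f ∧ PCLsat γ₂ g

/-- Syntax of weighted PCL over ports `P` and a pv-monoid with carrier `D`. -/
inductive WPCL (P D : Type) where
  | const : D → WPCL P D
  | pcl : PCL P → WPCL P D
  | oplus : WPCL P D → WPCL P D → WPCL P D
  | otimes : WPCL P D → WPCL P D → WPCL P D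
  | coal : WPCL P D → WPCL P D → WPCL P D
  | star : WPCL P D → WPCL P D

open scoped Classical in
/-- Semantics of weighted PCL formulas.  The pv-monoid is given by an additive
commutative monoid `D` (the `⊕` operation and `0`), a multiplication `ot` (`⊗`),
a unit `one` and a symmetric valuation function `val` on nonempty multisets. -/
noncomputable def sem {P D : Type} [DecidableEq P] [AddCommMonoid D]
    (ot : D → D → D) (one : D) (val : Multiset D → D) :
    WPCL P D → Finset (Finset P) → D
  | .const d, _ => d
  | .pcl f, γ => if PCLsat γ f then one else 0
  | .oplus ζ₁ ζ₂, γ => sem ot one val ζ₁ γ + sem ot one val ζ₂ γ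
  | .otimes ζ₁ ζ₂, γ => ot (sem ot one val ζ₁ γ) (sem ot one val ζ₂ γ)
  | .coal ζ₁ ζ₂, γ =>
      ∑ p ∈ (γ.powerset ×ˢ γ.powerset).filter
        (fun p => p.1.Nonempty ∧ p.2.Nonempty ∧ Disjoint p.1 p.2 ∧ p.1 ∪ p.2 = γ),
        ot (sem ot one val ζ₁ p.1) (sem ot one val ζ₂ p.2)
  | .star ζ, γ =>
      ∑ Q ∈ γ.powerset.powerset.filter
        (fun Q => Q.Nonempty ∧ (∀ x ∈ Q, x.Nonempty) ∧
          (∀ x ∈ Q, ∀ y ∈ Q, x ≠ y → Disjoint x y) ∧ Q.sup id = γ),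
        val (Q.val.map (fun x => sem ot one val ζ x))

/-- `γ` is a configuration: a nonempty set of (nonempty) interactions. -/
def Config {P : Type} (γ : Finset (Finset P)) : Prop :=
  γ.Nonempty ∧ ∀ a ∈ γ, a.Nonempty

/-- The axioms of an (idempotent) product valuation monoid, on top of the
additive commutative monoid structure `(D, +, 0)`. -/
structure IsPVM (D : Type) [AddCommMonoid D]
    (ot : D → D → D) (one : D) (val : Multiset D → D) : Prop where
  zero_ot : ∀ d, ot 0 d = 0
  ot_zero : ∀ d, ot d 0 = 0
  one_ot : ∀ d, ot one d = d
  ot_one : ∀ d, ot d one = d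
  val_singleton : ∀ d, val {d} = d
  val_zero : ∀ m : Multiset D, (0 : D) ∈ m → val m = 0
  val_one : ∀ n : ℕ, 1 ≤ n → val (Multiset.replicate n one) = one
  idem : ∀ d : D, d + d = d

/-- The wclosure `∼ζ := ζ ⊕ (ζ ⊎ 1)` of a weighted PCL formula. -/
def wclosure {P D : Type} (one : D) (ζ : WPCL P D) : WPCL P D :=
  ζ.oplus (ζ.coal (.const one))


/-- Conjunction of PIL formulas, defined via negation and disjunction. -/
noncomputable def PIL.conj {P : Type} (f g : PIL P) : PIL P := .neg (.disj (.neg f) (.neg g))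

/-- The characteristic (full) monomial of an interaction `a`: the conjunction of
all ports in `a` and the negations of all ports not in `a`. -/
noncomputable def charMonomial {P : Type} [Fintype P] [DecidableEq P] (a : Finset P) : PIL P :=
  (Finset.univ.toList.map
    (fun p => if p ∈ a then PIL.port p else PIL.neg (PIL.port p))).foldr PIL.conj PIL.tt

/-- The PCL coalescing sum `∑ⱼ mⱼ` of the full monomials determined by a
(nonempty) list of interactions. -/
noncomputable def pclSum {P : Type} [Fintype P] [DecidableEq P] : List (Finset P) → PCL P
  | [] => PCL.tt
  | [a] => PCL.pil (charMonomial a)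
  | a :: rest => PCL.coal (PCL.pil (charMonomial a)) (pclSum rest)

lemma PILsat_conj {P : Type} (α : Finset P) (f g : PIL P) :
    PILsat α (PIL.conj f g) ↔ PILsat α f ∧ PILsat α g := by
  unfold PIL.conj
  simp [PILsat]

lemma PILsat_foldr {P : Type} (α : Finset P) (L : List (PIL P)) :
    PILsat α (L.foldr PIL.conj PIL.tt) ↔ ∀ f ∈ L, PILsat α f := by
  induction L with
  | nil => simp [PILsat]
  | cons h t ih => simp [PILsat_conj, ih]

lemma PILsat_charMonomial {P : Type} [Fintype P] [DecidableEq P]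
    (α a : Finset P) : PILsat α (charMonomial a) ↔ α = a := by
  unfold charMonomial
  rw [PILsat_foldr]
  simp only [List.mem_map, Finset.mem_toList, Finset.mem_univ, true_and]
  constructor
  · intro h
    ext p
    have := h _ ⟨p, rfl⟩
    by_cases hp : p ∈ a <;> simp [hp, PILsat] at this ⊢ <;> tauto
  · rintro rfl f ⟨p, rfl⟩
    by_cases hp : p ∈ α <;> simp [hp, PILsat]

lemma PCLsat_charMonomial {P : Type} [Fintype P] [DecidableEq P]
    (γ : Finset (Finset P)) (hγ : γ.Nonempty) (a : Finset P) :
    PCLsat γ (PCL.pil (charMonomial a)) ↔ γ = {a} := by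
  simp only [PCLsat, PILsat_charMonomial]
  constructor
  · intro h
    apply Finset.eq_singleton_iff_nonempty_unique_mem.mpr ⟨hγ, h⟩
  · rintro rfl b hb; simpa using hb

lemma pclSum_key {P : Type} [Fintype P] [DecidableEq P] :
    ∀ (l : List (Finset P)), l ≠ [] → ∀ γ : Finset (Finset P), γ.Nonempty →
      (PCLsat γ (pclSum l) ↔ γ = l.toFinset) := by
  intro l
  induction l with
  | nil => intro h; exact absurd rfl h
  | cons a rest ih =>
    intro _ γ hγ
    cases rest with
    | nil =>
      simpa [pclSum] using PCLsat_charMonomial γ hγ a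
    | cons b rest' =>
      show PCLsat γ (PCL.coal (PCL.pil (charMonomial a)) (pclSum (b :: rest'))) ↔ _
      constructor
      · rintro ⟨γ₁, γ₂, h₁, h₂, hun, hs₁, hs₂⟩
        rw [PCLsat_charMonomial γ₁ h₁ a] at hs₁
        rw [ih (by simp) γ₂ h₂] at hs₂
        subst hs₁ hs₂ hun
        simp [Finset.insert_eq, -Finset.singleton_union]
      · rintro rfl
        refine ⟨{a}, (b :: rest').toFinset, Finset.singleton_nonempty a,
          ⟨b, by simp⟩, by simp [Finset.insert_eq, -Finset.singleton_union], ?_, ?_⟩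
        · exact (PCLsat_charMonomial _ (Finset.singleton_nonempty a) a).mpr rfl
        · exact (ih (by simp) _ ⟨b, by simp⟩).mpr rfl

theorem stmt6 {P : Type} [Fintype P] [DecidableEq P] [Nonempty P]
    (l : List (Finset P)) (hl : l ≠ []) (hne : ∀ a ∈ l, a.Nonempty) :
    ∃! γb : Finset (Finset P), Config γb ∧
      (∀ γ : Finset (Finset P), Config γ → (PCLsat γ (pclSum l) ↔ γ = γb)) ∧
      γb = l.toFinset := by
  refine ⟨l.toFinset, ⟨⟨?_, ?_⟩, ?_, rfl⟩, ?_⟩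
  · cases l with
    | nil => exact absurd rfl hl
    | cons a t => exact ⟨a, by simp⟩
  · intro a ha; exact hne a (by simpa using ha)
  · intro γ hγ; exact pclSum_key l hl γ hγ.1
  · rintro γb' ⟨-, -, rfl⟩; rfl
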